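/- Let f : R → S be a map of commutative rings. Then f is faithfully flat if and only if f is flat, injective, and the cokernel of f (as a map of R-modules) is a flat R-module. -/

import Mathlib

open TensorProduct LinearMap Function

section auxlemmas

variable {R : Type*} [CommRing R]

/-- Purity of faithfully flat: if `1 ⊗ n = 0` in `S ⊗ N` then `n = 0`. -/
lemma aux_pure (S : Type*) [CommRing S] [Algebra R S] [Module.FaithfullyFlat R S]
    {N : Type*} [AddCommGroup N] [Module R N] {n : N} (hn : (1 : S) ⊗ₜ[R] n = 0) : n = 0 := by
  set g : N →ₗ[R] S ⊗[R] N := TensorProduct.mk R S N 1 with hg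
  set m : S ⊗[R] (S ⊗[R] N) →ₗ[R] S ⊗[R] N :=
    (LinearMap.mul' R S).rTensor N ∘ₗ (TensorProduct.assoc R S S N).symm.toLinearMap with hm
  have hmg : ∀ z : S ⊗[R] N, m (g.lTensor S z) = z := by
    intro z
    induction z using TensorProduct.induction_on with
    | zero => simp
    | tmul s n' => simp [hm, hg, TensorProduct.assoc_symm_tmul, LinearMap.mul'_apply]
    | add a b ha hb => simp only [map_add, ha, hb]
  have hinj : Function.Injective (g.lTensor S) := fun a b hab => by
    rw [← hmg a, hab, hmg b]
  have hgh : g ∘ₗ LinearMap.toSpanSingleton R N n = 0 := by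
    ext
    show g ((1 : R) • n) = 0
    rw [one_smul]
    show (1 : S) ⊗ₜ[R] n = 0
    exact hn
  have h0 : (LinearMap.toSpanSingleton R N n).lTensor S = 0 := by
    apply LinearMap.ext
    intro z
    apply hinj
    rw [LinearMap.zero_apply, map_zero, ← LinearMap.comp_apply, ← lTensor_comp, hgh,
      lTensor_zero, LinearMap.zero_apply]
  have := (Module.FaithfullyFlat.zero_iff_lTensor_zero R S
    (LinearMap.toSpanSingleton R N n)).mpr h0
  simpa using congrArg (fun (l : R →ₗ[R] N) => l 1) this

set_option maxHeartbeats 1000000 in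
/-- If `0 → A → B → C → 0` is exact with `B`, `C` flat and `ι` injective, then
`ι ⊗ id N : A ⊗ N → B ⊗ N` is injective for every `N`. -/
lemma aux_rTensor_injective {A B C : Type*} [AddCommGroup A] [AddCommGroup B] [AddCommGroup C]
    [Module R A] [Module R B] [Module R C] [Module.Flat R B] [Module.Flat R C]
    {ι : A →ₗ[R] B} {π : B →ₗ[R] C} (hexact : Function.Exact ι π) (hπ : Function.Surjective π)
    (hι : Function.Injective ι)
    (N : Type*) [AddCommGroup N] [Module R N] :
    Function.Injective (ι.rTensor N) := by
  rw [← LinearMap.ker_eq_bot, eq_bot_iff]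
  intro x hx
  rw [LinearMap.mem_ker] at hx
  set F := N →₀ R with hF
  set p : F →ₗ[R] N := Finsupp.linearCombination R id with hp
  have hps : Function.Surjective p := Finsupp.linearCombination_id_surjective R N
  obtain ⟨y, hy⟩ : ∃ y : A ⊗[R] F, p.lTensor A y = x := LinearMap.lTensor_surjective A hps x
  set k : (ker p : Submodule R F) →ₗ[R] F := (ker p).subtype with hk
  have hkp : Function.Exact k p := p.exact_subtype_ker_map
  have h1 : p.lTensor B (ι.rTensor F y) = 0 := by
    have comm1 : (p.lTensor B) ∘ₗ (ι.rTensor F) = (ι.rTensor N) ∘ₗ (p.lTensor A) := by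
      rw [rTensor_comp_lTensor, lTensor_comp_rTensor]
    rw [← LinearMap.comp_apply, comm1, LinearMap.comp_apply, hy, hx]
  obtain ⟨w, hw⟩ := ((@Module.Flat.lTensor_exact R B _ _ _ _ (ker p : Submodule R F) F N
    _ _ _ _ _ _ k p hkp) (ι.rTensor F y)).mp h1
  have hCinj := Module.Flat.lTensor_preserves_injective_linearMap (R := R) (M := C)
    (N := ↥(ker p)) (P := F) k (Submodule.injective_subtype _)
  have hcol := rTensor_exact (R := R) (f := ι) (g := π) (↥(ker p)) hexact hπ
  obtain ⟨v, hv⟩ := (hcol w).mp (by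
    refine hCinj ?_
    rw [map_zero]
    have comm2 : (k.lTensor C) ∘ₗ (π.rTensor _) = (π.rTensor F) ∘ₗ (k.lTensor B) := by
      rw [rTensor_comp_lTensor, lTensor_comp_rTensor]
    rw [← LinearMap.comp_apply, comm2, LinearMap.comp_apply, hw, ← LinearMap.comp_apply,
      ← rTensor_comp, hexact.linearMap_comp_eq_zero, rTensor_zero, LinearMap.zero_apply])
  have hyv : y = k.lTensor A v := by
    apply Module.Flat.rTensor_preserves_injective_linearMap (M := F) ι hι
    have comm3 : (k.lTensor B) ∘ₗ (ι.rTensor _) = (ι.rTensor F) ∘ₗ (k.lTensor A) := by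
      rw [rTensor_comp_lTensor, lTensor_comp_rTensor]
    rw [← hw, ← hv, ← LinearMap.comp_apply, comm3, LinearMap.comp_apply]
  have hx0 : x = 0 := by
    rw [← hy, hyv, ← LinearMap.comp_apply, ← lTensor_comp]
    have hpk : p ∘ₗ k = 0 := by
      ext a
      exact a.2
    rw [hpk, lTensor_zero, LinearMap.zero_apply]
  rw [hx0]
  exact Submodule.zero_mem ⊥

end auxlemmas

/-- Let `f : R → S` be a map of commutative rings.  Then `f` is faithfully
flat (i.e. `S` is a faithfully flat `R`-module via `f`) if and only if `f` is flat, injective,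
and the cokernel of `f`, taken in the category of `R`-modules, is a flat `R`-module. -/
theorem stmt_4 (R S : Type*) [CommRing R] [CommRing S] (f : R →+* S) :
    letI : Algebra R S := f.toAlgebra
    (Module.FaithfullyFlat R S ↔
      Module.Flat R S ∧ Function.Injective f ∧
        Module.Flat R (S ⧸ LinearMap.range (Algebra.linearMap R S))) := by
  letI : Algebra R S := f.toAlgebra
  have halg : (algebraMap R S) = f := rfl
  set ι : R →ₗ[R] S := Algebra.linearMap R S with hι
  set Q := LinearMap.range ι with hQ
  set π : S →ₗ[R] (S ⧸ Q) := Q.mkQ with hπ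
  have hexact : Function.Exact ι π := by
    rw [LinearMap.exact_iff, hπ, Submodule.ker_mkQ]
  have hπs : Function.Surjective π := Submodule.mkQ_surjective Q
  constructor
  · intro hFF
    have hflat : Module.Flat R S := inferInstance
    have hinj : Function.Injective f := by
      rw [injective_iff_map_eq_zero]
      intro r hr
      refine aux_pure (R := R) S (N := R) ?_
      have h1 : ((r • (1 : S)) ⊗ₜ[R] (1 : R) : S ⊗[R] R) = (1 : S) ⊗ₜ[R] r := by
        rw [TensorProduct.smul_tmul, smul_eq_mul, mul_one]
      rw [← h1, Algebra.smul_def, mul_one, show algebraMap R S r = f r from rfl, hr,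
        TensorProduct.zero_tmul]
    refine ⟨hflat, hinj, ?_⟩
    rw [Module.Flat.iff_rTensor_injective']
    intro I
    rw [← LinearMap.ker_eq_bot, eq_bot_iff]
    intro x hx
    rw [LinearMap.mem_ker] at hx
    obtain ⟨y, hy⟩ := LinearMap.lTensor_surjective (I : Submodule R R) hπs x
    set μ : (I : Submodule R R) ⊗[R] S →ₗ[R] S :=
      (TensorProduct.lid R S).toLinearMap ∘ₗ (I.subtype.rTensor S) with hμ
    have hμinj : Function.Injective μ := by
      apply Function.Injective.comp (TensorProduct.lid R S).injective
      exact Module.Flat.rTensor_preserves_injective_linearMap I.subtype I.injective_subtype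
    -- π (μ y) = 0
    have hnat : ∀ t : (I : Submodule R R) ⊗[R] S, π (μ t) = (TensorProduct.lid R (S ⧸ Q))
        ((I.subtype.rTensor (S ⧸ Q)) (π.lTensor _ t)) := by
      intro t
      induction t using TensorProduct.induction_on with
      | zero => simp
      | tmul i s => simp [hμ]
      | add a b ha hb => simp only [map_add, ha, hb]
    have hπμ : π (μ y) = 0 := by
      rw [hnat y, hy]
      have : (I.subtype.rTensor (S ⧸ Q)) x = 0 := hx
      rw [this, map_zero]
    obtain ⟨r, hr⟩ : μ y ∈ Q := by
      rw [← Submodule.Quotient.mk_eq_zero Q]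
      exact hπμ
    have hfr : f r = μ y := hr
    -- r ∈ I via purity applied to R ⧸ I
    have hrI : r ∈ I := by
      have key : ∀ t : (I : Submodule R R) ⊗[R] S,
          (μ t) ⊗ₜ[R] (Ideal.Quotient.mk I 1) = (0 : S ⊗[R] (R ⧸ I)) := by
        intro t
        induction t using TensorProduct.induction_on with
        | zero => simp
        | tmul i s =>
          have : μ (i ⊗ₜ[R] s) = (i : R) • s := by simp [hμ]
          rw [this]
          have h2 : (i : R) • (Ideal.Quotient.mk I (1 : R)) = 0 := by
            rw [← Ideal.Quotient.mk_eq_mk, ← Submodule.Quotient.mk_smul, smul_eq_mul, mul_one,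
              Submodule.Quotient.mk_eq_zero]
            exact i.2
          rw [TensorProduct.smul_tmul, h2, TensorProduct.tmul_zero]
        | add a b ha hb => rw [map_add, TensorProduct.add_tmul, ha, hb, add_zero]
      have h1r : (1 : S) ⊗ₜ[R] (Ideal.Quotient.mk I r) = 0 := by
        have hmk : Ideal.Quotient.mk I r = r • Ideal.Quotient.mk I (1 : R) := by
          simp only [← Ideal.Quotient.mk_eq_mk]
          rw [← Submodule.Quotient.mk_smul, smul_eq_mul, mul_one]
        have h3 : ((r • (1 : S)) ⊗ₜ[R] (Ideal.Quotient.mk I (1 : R)) : S ⊗[R] (R ⧸ I))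
            = (1 : S) ⊗ₜ[R] (Ideal.Quotient.mk I r) := by
          rw [TensorProduct.smul_tmul, ← hmk]
        rw [← h3, Algebra.smul_def, mul_one, show algebraMap R S r = f r from rfl, hfr, key y]
      have := aux_pure S h1r
      rwa [Ideal.Quotient.eq_zero_iff_mem] at this
    have hyr : y = (⟨r, hrI⟩ : I) ⊗ₜ[R] (1 : S) := by
      apply hμinj
      have : μ ((⟨r, hrI⟩ : I) ⊗ₜ[R] (1 : S)) = f r := by
        simp [hμ, Algebra.smul_def, halg]
      rw [this, hfr]
    have hx0 : x = 0 := by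
      rw [← hy, hyr]
      have hπ1 : π (1 : S) = 0 := by
        rw [hπ, ← LinearMap.mem_ker, Submodule.ker_mkQ]
        exact ⟨1, by simp [hι]⟩
      rw [lTensor_tmul, hπ1, TensorProduct.tmul_zero]
    rw [hx0]
    exact Submodule.zero_mem ⊥
  · rintro ⟨hflat, hinj, hC⟩
    have hιinj : Function.Injective ι := by
      intro a b hab
      exact hinj hab
    rw [Module.FaithfullyFlat.iff_flat_and_rTensor_faithful]
    refine ⟨hflat, fun N _ _ hN => ?_⟩
    obtain ⟨n, hn⟩ := exists_ne (0 : N)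
    have hinjN : Function.Injective (ι.rTensor N) :=
      aux_rTensor_injective hexact hπs hιinj N
    have h1 : ((1 : R) ⊗ₜ[R] n : R ⊗[R] N) ≠ 0 := by
      intro h
      apply hn
      have := congrArg (TensorProduct.lid R N) h
      simpa using this
    have h2 : (ι.rTensor N) ((1 : R) ⊗ₜ[R] n) ≠ 0 := fun h => h1 (hinjN (by rw [h, map_zero]))
    have : Nontrivial (S ⊗[R] N) := nontrivial_of_ne _ 0 h2
    exact (TensorProduct.comm R N S).toEquiv.nontrivial
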